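/- Every Alster space is Menger. -/
import Mathlib


def Alster (X : Type*) [TopologicalSpace X] : Prop :=
  ∀ G : Set (Set X), (∀ g ∈ G, IsGδ g) → ⋃₀ G = Set.univ →
    (∀ K : Set X, IsCompact K → ∃ F ⊆ G, F.Finite ∧ K ⊆ ⋃₀ F) →
    ∃ H ⊆ G, H.Countable ∧ ⋃₀ H = Set.univ

def Menger (X : Type*) [TopologicalSpace X] : Prop :=
  ∀ U : ℕ → Set (Set X), (∀ n, ∀ u ∈ U n, IsOpen u) → (∀ n, ⋃₀ U n = Set.univ) →
    ∃ V : ℕ → Set (Set X), (∀ n, V n ⊆ U n) ∧ (∀ n, (V n).Finite) ∧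
      ⋃ n, ⋃₀ V n = Set.univ

/-- Every Alster space is Menger. -/
theorem alster_menger (X : Type*) [TopologicalSpace X] (h : Alster X) : Menger X := by
  intro U hUo hUc
  -- covers closed under finite unions
  set W : ℕ → Set (Set X) := fun n => {s | ∃ F ⊆ U n, F.Finite ∧ s = ⋃₀ F} with hW
  have hWo : ∀ n, ∀ s ∈ W n, IsOpen s := by
    rintro n s ⟨F, hFU, hFfin, rfl⟩
    exact isOpen_sUnion fun t ht => hUo n t (hFU ht)
  -- the Gδ family
  set G : Set (Set X) := {s | ∃ f : ℕ → Set X, (∀ n, f n ∈ W n) ∧ s = ⋂ n, f n} with hG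
  have hGδ : ∀ g ∈ G, IsGδ g := by
    rintro g ⟨f, hf, rfl⟩
    exact IsGδ.iInter fun n => (hWo n _ (hf n)).isGδ
  have hGcov : ⋃₀ G = Set.univ := by
    apply Set.eq_univ_of_forall
    intro x
    have hx : ∀ n, ∃ u ∈ U n, x ∈ u := by
      intro n
      have := (hUc n) ▸ Set.mem_univ x
      simpa [Set.mem_sUnion] using this
    choose u hu hxu using hx
    refine ⟨⋂ n, u n, ⟨u, fun n => ⟨{u n}, by simpa using hu n, Set.finite_singleton _, by
      simp⟩, rfl⟩, Set.mem_iInter.2 hxu⟩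
  have hGcpt : ∀ K : Set X, IsCompact K → ∃ F ⊆ G, F.Finite ∧ K ⊆ ⋃₀ F := by
    intro K hK
    have hKn : ∀ n, ∃ F ⊆ U n, F.Finite ∧ K ⊆ ⋃₀ F := by
      intro n
      obtain ⟨F, hFU, hFfin, hKF⟩ := hK.elim_finite_subcover_image
        (fun u (hu : u ∈ U n) => hUo n u hu)
        (by rw [← Set.sUnion_eq_biUnion, hUc n]; exact Set.subset_univ K)
      exact ⟨F, hFU, hFfin, by rwa [Set.sUnion_eq_biUnion]⟩
    choose F hFU hFfin hKF using hKn
    refine ⟨{⋂ n, ⋃₀ F n}, ?_, Set.finite_singleton _, ?_⟩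
    · rintro s (rfl : s = _)
      exact ⟨fun n => ⋃₀ F n, fun n => ⟨F n, hFU n, hFfin n, rfl⟩, rfl⟩
    · intro x hx
      exact ⟨_, rfl, Set.mem_iInter.2 fun n => hKF n hx⟩
  obtain ⟨H, hHG, hHcnt, hHcov⟩ := h G hGδ hGcov hGcpt
  rcases H.eq_empty_or_nonempty with rfl | hHne
  · -- X is empty
    refine ⟨fun _ => ∅, fun n => Set.empty_subset _, fun n => Set.finite_empty, ?_⟩
    simp only [Set.sUnion_empty, Set.iUnion_empty]
    rw [Set.sUnion_empty] at hHcov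
    exact hHcov
  · obtain ⟨g, rfl⟩ := Set.Countable.exists_eq_range hHcnt hHne
    have hg : ∀ k, ∃ f : ℕ → Set X, (∀ n, f n ∈ W n) ∧ g k = ⋂ n, f n := fun k =>
      hHG ⟨k, rfl⟩
    choose f hfW hgf using hg
    have hdiag : ∀ k, ∃ F ⊆ U k, F.Finite ∧ f k k = ⋃₀ F := fun k => hfW k k
    choose V hVU hVfin hVeq using hdiag
    refine ⟨V, hVU, hVfin, Set.eq_univ_of_forall fun x => ?_⟩
    have hx : x ∈ ⋃₀ Set.range g := hHcov ▸ Set.mem_univ x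
    obtain ⟨s, ⟨k, rfl⟩, hxs⟩ := hx
    rw [hgf k] at hxs
    have : x ∈ f k k := Set.mem_iInter.1 hxs k
    rw [hVeq k] at this
    exact Set.mem_iUnion.2 ⟨k, this⟩
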